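/- Let A be a homology class in a closed 4-manifold X with b⁺(X) > 1, represented by an immersed sphere with p positive double points, satisfying the adjunction equality 2p − 2 = A² + K·A. If SW(K) ≠ 0, K·A ≤ −1, and A² ≥ 0, then SW(K − 2mA) ≠ 0 for all nonnegative integers m; combined with finiteness of basic classes this is a contradiction, hence A² = −1 and K·A = −1. -/

import Mathlib

/-- The inductive Seiberg–Witten argument of Corollary `rat`.  Axiomatized
data: `H` is the second cohomology lattice of a closed 4-manifold `X` with
`b⁺(X) > 1`, `B` the intersection pairing, `SW L` the predicate
"`SW_X(L) ≠ 0`", `K` the canonical class, `A ≠ 0` a class represented by an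
immersed sphere with `p` positive double points.  Hypotheses: the
Fintushel–Stern theorem `hFS` (for `L` with `SW L ≠ 0` and `L·A ≤ 0`, either
`2p - 2 ≥ A² + |L·A|` or `SW (L - 2A) ≠ 0`), finiteness of the set of basic
classes `hfin`, the adjunction equality `2p - 2 = A² + K·A`, `SW K ≠ 0`, and
`K·A ≤ -1`.  Conclusion: if `A² ≥ 0` then `SW (K - 2mA) ≠ 0` for every
`m ≥ 0` (which contradicts finiteness), hence in fact `A² = -1` and
`K·A = -1`. -/
theorem sw_induction (H : Type*) [AddCommGroup H] [Module ℤ H]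
    [NoZeroSMulDivisors ℤ H]
    (B : H →ₗ[ℤ] H →ₗ[ℤ] ℤ) (SW : H → Prop) (K A : H) (p : ℕ)
    (hA : A ≠ 0)
    (hFS : ∀ L : H, SW L → B L A ≤ 0 →
      (B A A + |B L A| ≤ 2 * (p : ℤ) - 2 ∨ SW (L - (2 : ℤ) • A)))
    (hfin : {L : H | SW L}.Finite)
    (hadj : 2 * (p : ℤ) - 2 = B A A + B K A)
    (hSWK : SW K) (hKA : B K A ≤ -1) :
    (0 ≤ B A A → ∀ m : ℕ, SW (K - (2 * (m : ℤ)) • A)) ∧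
      B A A = -1 ∧ B K A = -1 := by
  have hmain : 0 ≤ B A A → ∀ m : ℕ, SW (K - (2 * (m : ℤ)) • A) := by
    intro ha m
    induction m with
    | zero => simpa using hSWK
    | succ n ih =>
      have hval : B (K - (2 * (n : ℤ)) • A) A = B K A - 2 * (n : ℤ) * B A A := by
        simp [map_sub, map_smul, smul_eq_mul, mul_assoc]
      have hL : B (K - (2 * (n : ℤ)) • A) A ≤ 0 := by
        rw [hval]
        have hn : (0 : ℤ) ≤ (n : ℤ) := Int.natCast_nonneg n
        nlinarith
      rcases hFS _ ih hL with h | h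
      · exfalso
        rw [hval] at h
        have habs : (0 : ℤ) ≤ |B K A - 2 * (n : ℤ) * B A A| := abs_nonneg _
        linarith
      · have heq : K - (2 * (n : ℤ)) • A - (2 : ℤ) • A
            = K - (2 * ((n + 1 : ℕ) : ℤ)) • A := by
          have h2 : (2 * ((n + 1 : ℕ) : ℤ)) = 2 * (n : ℤ) + 2 := by push_cast; ring
          rw [h2, sub_sub, ← add_zsmul]
        rwa [heq] at h
  have hneg : B A A ≤ -1 := by
    by_contra h
    push_neg at h
    have ha : 0 ≤ B A A := by omega
    have hinj : Function.Injective (fun m : ℕ => K - (2 * (m : ℤ)) • A) := by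
      intro m n hmn
      simp only [sub_right_injective.eq_iff] at hmn
      have hz : ((2 * (m : ℤ)) - 2 * (n : ℤ)) • A = 0 := by
        rw [sub_zsmul, hmn]; simp
      rcases (‹NoZeroSMulDivisors ℤ H›).eq_zero_or_eq_zero_of_smul_eq_zero hz with h' | h'
      · omega
      · exact absurd h' hA
    exact (Set.infinite_of_injective_forall_mem hinj
      (fun m => hmain ha m)) hfin
  have hp : (0 : ℤ) ≤ (p : ℤ) := Int.natCast_nonneg p
  exact ⟨hmain, by linarith, by linarith⟩
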